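/- Let 2 ≤ e ≤ m be integers and let S ∈ L(m,e). Then [S] ∩ C(m,e) = {φ(S)}; that is, φ(S) is the unique packed numerical semigroup T with multiplicity m and embedding dimension e satisfying φ(T) = φ(S). -/

import Mathlib

open scoped Pointwise

/-- A numerical semigroup: an additive submonoid of ℕ with finite complement. -/
def IsNumericalSemigroup (S : Set ℕ) : Prop :=
  0 ∈ S ∧ (∀ a ∈ S, ∀ b ∈ S, a + b ∈ S) ∧ Sᶜ.Finite

/-- Multiplicity: the least positive element. -/
noncomputable def mult (S : Set ℕ) : ℕ := sInf (S \ {0})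

/-- Minimal system of generators: (S∖{0}) ∖ ((S∖{0})+(S∖{0})). -/
def msg (S : Set ℕ) : Set ℕ := (S \ {0}) \ ((S \ {0}) + (S \ {0}))

/-- Embedding dimension: cardinality of the minimal system of generators. -/
noncomputable def edim (S : Set ℕ) : ℕ := (msg S).ncard

/-- The submonoid of (ℕ,+) generated by a set, as a set. -/
def genSet (B : Set ℕ) : Set ℕ := (AddSubmonoid.closure B : Set ℕ)

/-- Packed numerical semigroup: msg(S) ⊆ {m(S),…,2m(S)−1}. -/
def IsPacked (S : Set ℕ) : Prop := msg S ⊆ Set.Icc (mult S) (2 * mult S - 1)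

/-- L(m,e): numerical semigroups with multiplicity m and embedding dimension e. -/
def Lset (m e : ℕ) : Set (Set ℕ) :=
  {S | IsNumericalSemigroup S ∧ mult S = m ∧ edim S = e}

/-- C(m,e): packed numerical semigroups in L(m,e). -/
def Cset (m e : ℕ) : Set (Set ℕ) := {S ∈ Lset m e | IsPacked S}

/-- φ(S): the monoid generated by {m + (x mod m) : x ∈ msg(S)}, m = mult S. -/
noncomputable def phi (S : Set ℕ) : Set ℕ :=
  genSet ((fun x => mult S + x % mult S) '' msg S)

/-- The class [S] = {T ∈ L(m,e) : φ(T) = φ(S)}. -/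
def classOf (m e : ℕ) (S : Set ℕ) : Set (Set ℕ) := {T ∈ Lset m e | phi T = phi S}

/-- Frobenius number: the largest element of the complement. -/
noncomputable def Frob (S : Set ℕ) : ℕ := sSup Sᶜ

/-- Genus: the cardinality of the complement. -/
noncomputable def genus (S : Set ℕ) : ℕ := Sᶜ.ncard

/-- The Apéry set of n in S. -/
def Ap (S : Set ℕ) (n : ℕ) : Set ℕ := {s ∈ S | ¬ ∃ t ∈ S, s = t + n}

/-- Minimal elements of a set in a partial order. -/
def minimalsOf {β : Type*} [PartialOrder β] (X : Set β) : Set β :=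
  {x ∈ X | ∀ y ∈ X, y ≤ x → y = x}

-- aux
lemma mod_eq_sub_of {x m : ℕ} (h1 : m ≤ x) (h2 : x < 2*m) : x % m = x - m := by
  rw [Nat.mod_eq_sub_mod h1, Nat.mod_eq_of_lt (by omega)]

lemma genSet_zero (B : Set ℕ) : (0:ℕ) ∈ genSet B := (AddSubmonoid.closure B).zero_mem

lemma genSet_add {B : Set ℕ} {x y : ℕ} (hx : x ∈ genSet B) (hy : y ∈ genSet B) :
    x + y ∈ genSet B := (AddSubmonoid.closure B).add_mem hx hy

lemma genSet_nsmul {B : Set ℕ} {x : ℕ} (hx : x ∈ genSet B) (k : ℕ) : k * x ∈ genSet B := by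
  induction k with
  | zero => simpa using genSet_zero B
  | succ n ih => have := genSet_add ih hx; simpa [Nat.succ_mul] using this

-- S nonzero elements nonempty
lemma sdiff_nonempty_of_ns {S : Set ℕ} (hS : IsNumericalSemigroup S) :
    (S \ {0}).Nonempty := by
  have h1 : S.Infinite := by
    have := hS.2.2.infinite_compl
    rwa [compl_compl] at this
  exact ((h1.diff (Set.finite_singleton 0))).nonempty

lemma mult_mem {S : Set ℕ} (hS : IsNumericalSemigroup S) : mult S ∈ S \ {0} :=
  Nat.sInf_mem (sdiff_nonempty_of_ns hS)

lemma mult_le {S : Set ℕ} {s : ℕ} (hs : s ∈ S) (hs0 : s ≠ 0) : mult S ≤ s :=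
  Nat.sInf_le ⟨hs, hs0⟩

-- multiples of mult are in S
lemma mul_mult_mem {S : Set ℕ} (hS : IsNumericalSemigroup S) (k : ℕ) :
    k * mult S ∈ S := by
  induction k with
  | zero => simpa using hS.1
  | succ n ih => have := hS.2.1 _ ih _ (mult_mem hS).1; simpa [Nat.succ_mul] using this

-- genSet of msg is S
lemma genSet_msg {S : Set ℕ} (hS : IsNumericalSemigroup S) : genSet (msg S) = S := by
  apply subset_antisymm
  · have hle : AddSubmonoid.closure (msg S) ≤
        { carrier := S, zero_mem' := hS.1,
          add_mem' := fun {a b} ha hb => hS.2.1 a ha b hb } :=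
      AddSubmonoid.closure_le.mpr (fun x hx => hx.1.1)
    exact fun x hx => hle hx
  · intro x
    induction x using Nat.strong_induction_on with
    | _ x ih =>
      intro hx
      by_cases hx0 : x = 0
      · exact hx0 ▸ genSet_zero _
      by_cases hm : x ∈ msg S
      · exact AddSubmonoid.subset_closure hm
      · have hsum : x ∈ (S \ {0}) + (S \ {0}) := by
          by_contra h; exact hm ⟨⟨hx, hx0⟩, h⟩
        obtain ⟨a, ha, b, hb, hab⟩ := Set.mem_add.mp hsum
        have ha0 : a ≠ 0 := ha.2
        have hb0 : b ≠ 0 := hb.2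
        have := genSet_add (ih a (by omega) ha.1) (ih b (by omega) hb.1)
        rwa [hab] at this

-- mult is in msg
lemma mult_mem_msg {S : Set ℕ} (hS : IsNumericalSemigroup S) : mult S ∈ msg S := by
  refine ⟨mult_mem hS, ?_⟩
  intro h
  obtain ⟨a, ha, b, hb, hab⟩ := Set.mem_add.mp h
  have h1 := mult_le ha.1 ha.2
  have h2 := mult_le hb.1 hb.2
  have : mult S ≠ 0 := (mult_mem hS).2
  omega

-- distinct residues in msg
lemma msg_inj_mod {S : Set ℕ} (hS : IsNumericalSemigroup S) {x y : ℕ}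
    (hx : x ∈ msg S) (hy : y ∈ msg S) (h : x % mult S = y % mult S) : x = y := by
  rcases lt_trichotomy x y with hlt | he | hlt
  · exfalso
    have hd : mult S ∣ y - x := (Nat.modEq_iff_dvd' hlt.le).mp h
    obtain ⟨k, hk⟩ := hd
    have hyx : y - x ∈ S := by rw [hk, mul_comm]; exact mul_mult_mem hS k
    have : y ∈ (S \ {0}) + (S \ {0}) := by
      refine Set.mem_add.mpr ⟨x, hx.1, y - x, ⟨hyx, by simp; omega⟩, by omega⟩
    exact hy.2 this
  · exact he
  · exfalso
    have hd : mult S ∣ x - y := (Nat.modEq_iff_dvd' hlt.le).mp h.symm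
    obtain ⟨k, hk⟩ := hd
    have hxy : x - y ∈ S := by rw [hk, mul_comm]; exact mul_mult_mem hS k
    have : x ∈ (S \ {0}) + (S \ {0}) := by
      refine Set.mem_add.mpr ⟨y, hy.1, x - y, ⟨hxy, by simp; omega⟩, by omega⟩
    exact hx.2 this

-- residues reachable in closure
lemma exists_residue_genSet {A B : Set ℕ} {m : ℕ}
    (h : ∀ a ∈ A, ∃ c ∈ genSet B, c % m = a % m) :
    ∀ s ∈ genSet A, ∃ c ∈ genSet B, c % m = s % m := by
  intro s hs
  induction hs using AddSubmonoid.closure_induction with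
  | mem x hx => exact h x hx
  | zero => exact ⟨0, genSet_zero B, rfl⟩
  | add x y hx hy ihx ihy =>
    obtain ⟨c, hc, hcm⟩ := ihx
    obtain ⟨d, hd, hdm⟩ := ihy
    exact ⟨c + d, genSet_add hc hd, by rw [Nat.add_mod, hcm, hdm, ← Nat.add_mod]⟩

-- cofinite from residues
lemma compl_finite_of_residues {M : Set ℕ} (h0 : (0:ℕ) ∈ M)
    (hadd : ∀ a ∈ M, ∀ b ∈ M, a + b ∈ M)
    {m : ℕ} (hm : 0 < m) (hmM : m ∈ M)
    (hres : ∀ r < m, ∃ c ∈ M, c % m = r) : Mᶜ.Finite := by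
  have hmul : ∀ k, k * m ∈ M := by
    intro k
    induction k with
    | zero => simpa using h0
    | succ n ih => have := hadd _ ih _ hmM; simpa [Nat.succ_mul] using this
  choose! c hc hcr using hres
  set N := (Finset.range m).sup c with hN
  refine Set.Finite.subset (Set.finite_Iio (N + 1)) ?_
  intro n hn
  simp only [Set.mem_Iio]
  by_contra hge
  push_neg at hge
  have hrn : n % m < m := Nat.mod_lt _ hm
  have hcn := hc _ hrn
  have hcrn := hcr _ hrn
  have hcle : c (n % m) ≤ N := Finset.le_sup (Finset.mem_range.mpr hrn)
  have hle : c (n % m) ≤ n := by omega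
  have hd : m ∣ n - c (n % m) := by
    refine (Nat.modEq_iff_dvd' hle).mp ?_
    exact hcrn
  obtain ⟨k, hk⟩ := hd
  have hmk : m * k ∈ M := by rw [mul_comm]; exact hmul k
  have : n = c (n % m) + m * k := by omega
  exact hn (this ▸ hadd _ hcn _ hmk)

lemma phi_eq_self_of_packed {m e : ℕ} (hm : 2 ≤ m) {T : Set ℕ}
    (hT : T ∈ Lset m e) (hp : IsPacked T) : phi T = T := by
  obtain ⟨hNS, hmult, _⟩ := hT
  have hfix : ∀ x ∈ msg T, mult T + x % mult T = x := by
    intro x hx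
    have h := hp hx
    rw [Set.mem_Icc, hmult] at h
    rw [hmult, mod_eq_sub_of h.1 (by omega)]
    omega
  have himg : (fun x => mult T + x % mult T) '' msg T = msg T := by
    ext y
    constructor
    · rintro ⟨x, hx, rfl⟩
      show mult T + x % mult T ∈ msg T
      rw [hfix x hx]; exact hx
    · intro hy; exact ⟨y, hy, hfix y hy⟩
  rw [phi, himg, genSet_msg hNS]

lemma phi_mem (m e : ℕ) (h2 : 2 ≤ e) (hem : e ≤ m) {S : Set ℕ} (hS : S ∈ Lset m e) :
    phi S ∈ Lset m e ∧ IsPacked (phi S) := by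
  obtain ⟨hNS, hmult, hedim⟩ := hS
  have hm2 : 2 ≤ m := h2.trans hem
  have hm0 : 0 < m := by omega
  have hphi : phi S = genSet ((fun x => m + x % m) '' msg S) := by
    simp only [phi, hmult]
  set B := (fun x : ℕ => m + x % m) '' msg S with hB
  have hmsgmem : m ∈ msg S := hmult ▸ mult_mem_msg hNS
  have hmB : m ∈ B := ⟨m, hmsgmem, by simp⟩
  have hBIcc : ∀ b ∈ B, m ≤ b ∧ b ≤ 2 * m - 1 := by
    rintro b ⟨x, hx, rfl⟩
    have := Nat.mod_lt x hm0
    simp only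
    omega
  have hge : ∀ x ∈ genSet B, x = 0 ∨ m ≤ x := by
    intro x hx
    induction hx using AddSubmonoid.closure_induction with
    | mem x hx => right; exact (hBIcc x hx).1
    | zero => left; rfl
    | add x y hx hy ihx ihy => rcases ihx with h | h <;> rcases ihy with h' | h' <;> omega
  have hres : ∀ r < m, ∃ c ∈ genSet B, c % m = r := by
    intro r hr
    obtain ⟨N, hN⟩ := hNS.2.2.bddAbove
    have hsS : r + m * (N + 1) ∈ S := by
      by_contra h
      have := hN h
      nlinarith
    have hsr : (r + m * (N + 1)) % m = r := by
      rw [Nat.add_mul_mod_self_left, Nat.mod_eq_of_lt hr]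
    have hsgen : r + m * (N + 1) ∈ genSet (msg S) := by
      rw [genSet_msg hNS]; exact hsS
    have hstep : ∀ a ∈ msg S, ∃ c ∈ genSet B, c % m = a % m := by
      intro a ha
      exact ⟨m + a % m, AddSubmonoid.subset_closure ⟨a, ha, rfl⟩, by simp [Nat.add_mod]⟩
    obtain ⟨c, hc, hcm⟩ := exists_residue_genSet hstep _ hsgen
    exact ⟨c, hc, by rw [hcm, hsr]⟩
  have hNSM : IsNumericalSemigroup (genSet B) :=
    ⟨genSet_zero B, fun a ha b hb => genSet_add ha hb,
      compl_finite_of_residues (genSet_zero B) (fun a ha b hb => genSet_add ha hb) hm0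
        (AddSubmonoid.subset_closure hmB) hres⟩
  have hmultM : mult (genSet B) = m := by
    apply le_antisymm
    · exact mult_le (AddSubmonoid.subset_closure hmB) (by omega)
    · have hmm := mult_mem hNSM
      rcases hge _ hmm.1 with h | h
      · exact absurd h (by simpa using hmm.2)
      · exact h
  have hmsgM : msg (genSet B) = B := by
    ext x
    constructor
    · rintro ⟨⟨hx1, hx2⟩, hx3⟩
      have claim : ∀ y ∈ genSet B,
          y = 0 ∨ y ∈ B ∨ y ∈ ((genSet B) \ {0}) + ((genSet B) \ {0}) := by
        intro y hy
        induction hy using AddSubmonoid.closure_induction with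
        | mem y hy => right; left; exact hy
        | zero => left; rfl
        | add y z hy hz ihy ihz =>
          rcases ihy with h0 | hyB
          · rw [h0, zero_add]; exact ihz
          rcases ihz with h0 | hzB
          · rw [h0, add_zero]; right; exact hyB
          have hy0 : y ≠ 0 := by
            rcases hge _ hy with h | h
            · exact absurd h (by
                rcases hyB with h' | h'
                · have := (hBIcc _ h').1; omega
                · obtain ⟨a, ha, b, hb, hab⟩ := Set.mem_add.mp h'
                  have := hge a ha.1
                  have ha0 : a ≠ 0 := by simpa using ha.2
                  omega)
            · omega
          have hz0 : z ≠ 0 := by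
            rcases hge _ hz with h | h
            · exact absurd h (by
                rcases hzB with h' | h'
                · have := (hBIcc _ h').1; omega
                · obtain ⟨a, ha, b, hb, hab⟩ := Set.mem_add.mp h'
                  have := hge a ha.1
                  have ha0 : a ≠ 0 := by simpa using ha.2
                  omega)
            · omega
          right; right
          exact Set.mem_add.mpr ⟨y, ⟨hy, hy0⟩, z, ⟨hz, hz0⟩, rfl⟩
      rcases claim x hx1 with h | h | h
      · exact absurd h (by simpa using hx2)
      · exact h
      · exact absurd h hx3
    · intro hxB
      refine ⟨⟨AddSubmonoid.subset_closure hxB, ?_⟩, ?_⟩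
      · have := (hBIcc x hxB).1; simp; omega
      · intro h
        obtain ⟨a, ha, b, hb, hab⟩ := Set.mem_add.mp h
        have ha' := hge a ha.1
        have hb' := hge b hb.1
        have hx2 := (hBIcc x hxB).2
        have ha0 : a ≠ 0 := by simpa using ha.2
        have hb0 : b ≠ 0 := by simpa using hb.2
        omega
  have hedimM : edim (genSet B) = e := by
    rw [edim, hmsgM, hB]
    have hinj : Set.InjOn (fun x : ℕ => m + x % m) (msg S) := by
      intro x hx y hy hxy
      apply msg_inj_mod hNS hx hy
      rw [hmult]
      simpa using hxy
    rw [Set.ncard_image_of_injOn hinj]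
    exact hedim
  have hpacked : IsPacked (genSet B) := by
    rw [IsPacked, hmsgM, hmultM]
    intro b hb
    exact Set.mem_Icc.mpr ⟨(hBIcc b hb).1, (hBIcc b hb).2⟩
  rw [hphi]
  exact ⟨⟨hNSM, hmultM, hedimM⟩, hpacked⟩

/-- [S] ∩ C(m,e) = {φ(S)}. -/
theorem stmt1 (m e : ℕ) (h2 : 2 ≤ e) (hem : e ≤ m)
    (S : Set ℕ) (hS : S ∈ Lset m e) :
    classOf m e S ∩ Cset m e = {phi S} := by
  have hm2 : 2 ≤ m := h2.trans hem
  obtain ⟨hL, hP⟩ := phi_mem m e h2 hem hS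
  have hidem : phi (phi S) = phi S := phi_eq_self_of_packed hm2 hL hP
  ext T
  simp only [Set.mem_inter_iff, Set.mem_singleton_iff, classOf, Cset, Set.mem_setOf_eq,
    Set.mem_sep_iff]
  constructor
  · rintro ⟨⟨hTL, hTphi⟩, _, hTp⟩
    have hT := phi_eq_self_of_packed hm2 hTL hTp
    rw [← hT, hTphi]
  · rintro rfl
    exact ⟨⟨hL, hidem⟩, hL, hP⟩
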